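/- For n ≥ 3 and m ≥ 3 with n > m−2, every red/blue coloring of K_{2n+1} contains a red K_{1,n} or a blue K_{1,m}+e. -/

import Mathlib

open SimpleGraph

/-- `Contains G H` : the graph `G` contains a copy of `H`. -/
def Contains {V W : Type*} (G : SimpleGraph V) (H : SimpleGraph W) : Prop :=
  ∃ f : W → V, Function.Injective f ∧ ∀ a b, H.Adj a b → G.Adj (f a) (f b)

/-- The star `K_{1,n}` on `n+1` vertices: vertex `0` is joined to all others. -/
def starG (n : ℕ) : SimpleGraph (Fin (n + 1)) :=
  SimpleGraph.fromRel (fun a _ => a = 0)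

/-- `K_{1,m}+e` on `m+1` vertices: vertex `0` joined to all others, plus the edge `{1,2}`. -/
def starPlusE (m : ℕ) : SimpleGraph (Fin (m + 1)) :=
  SimpleGraph.fromRel (fun a b => a = 0 ∨ (a = 1 ∧ b = 2))

lemma starG_of {V : Type*} [DecidableEq V] (n : ℕ) (G : SimpleGraph V) (v : V) (s : Finset V)
    (hcard : s.card = n) (hv : v ∉ s) (hadj : ∀ x ∈ s, G.Adj v x) :
    Contains G (starG n) := by
  let e : Fin n ≃ s := (s.equivFin.trans (finCongr hcard)).symm
  have he : ∀ j, (e j : V) ∈ s := fun j => (e j).2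
  refine ⟨fun i => if h : i.val = 0 then v else e ⟨i.val - 1, by omega⟩, ?_, ?_⟩
  · intro a b hab
    simp only [] at hab
    by_cases ha : a.val = 0 <;> by_cases hb : b.val = 0
    · exact Fin.ext (by omega)
    · rw [dif_pos ha, dif_neg hb] at hab
      exact absurd (hab.symm ▸ he _) hv
    · rw [dif_neg ha, dif_pos hb] at hab
      exact absurd (hab ▸ he _) hv
    · rw [dif_neg ha, dif_neg hb] at hab
      have h2 := congrArg Fin.val (e.injective (Subtype.ext hab))
      simp only [] at h2
      exact Fin.ext (by omega)
  · intro a b hab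
    rw [starG, SimpleGraph.fromRel_adj] at hab
    obtain ⟨hne, hc⟩ := hab
    have hz : (0 : Fin (n + 1)).val = 0 := rfl
    rcases hc with h0 | h0
    · have ha : a.val = 0 := by simp [h0]
      have hb : ¬ b.val = 0 := fun hb0 => hne (Fin.ext (by omega))
      simp only [dif_pos ha, dif_neg hb]
      exact hadj _ (he _)
    · have hb : b.val = 0 := by simp [h0]
      have ha : ¬ a.val = 0 := fun ha0 => hne (Fin.ext (by omega))
      simp only [dif_pos hb, dif_neg ha]
      exact (hadj _ (he _)).symm

lemma starPlusE_of {V : Type*} [DecidableEq V] (m : ℕ) (hm : 3 ≤ m) (G : SimpleGraph V)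
    (v u w : V) (s : Finset V) (hcard : s.card = m - 2)
    (hvu : v ≠ u) (hvw : v ≠ w) (huw : u ≠ w)
    (hvs : v ∉ s) (hus : u ∉ s) (hws : w ∉ s)
    (hadjvu : G.Adj v u) (hadjvw : G.Adj v w) (hadjuw : G.Adj u w)
    (hadj : ∀ x ∈ s, G.Adj v x) :
    Contains G (starPlusE m) := by
  let e : Fin (m - 2) ≃ s := (s.equivFin.trans (finCongr hcard)).symm
  have he : ∀ j, (e j : V) ∈ s := fun j => (e j).2
  refine ⟨fun i => if h0 : i.val = 0 then v else if h1 : i.val = 1 then u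
    else if h2 : i.val = 2 then w else e ⟨i.val - 3, by omega⟩, ?_, ?_⟩
  · intro a b hab
    simp only [] at hab
    split_ifs at hab with h1 h2 h3 h4 h5 h6 <;>
    first
      | exact Fin.ext (by omega)
      | exact absurd hab hvu
      | exact absurd hab.symm hvu
      | exact absurd hab hvw
      | exact absurd hab.symm hvw
      | exact absurd hab huw
      | exact absurd hab.symm huw
      | exact absurd (show _ ∈ s by rw [hab]; exact he _) hvs
      | exact absurd (show _ ∈ s by rw [← hab]; exact he _) hvs
      | exact absurd (show _ ∈ s by rw [hab]; exact he _) hus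
      | exact absurd (show _ ∈ s by rw [← hab]; exact he _) hus
      | exact absurd (show _ ∈ s by rw [hab]; exact he _) hws
      | exact absurd (show _ ∈ s by rw [← hab]; exact he _) hws
      | · have h2 := congrArg Fin.val (e.injective (Subtype.ext hab))
          simp only [] at h2
          exact Fin.ext (by omega)
  · intro a b hab
    rw [starPlusE, SimpleGraph.fromRel_adj] at hab
    obtain ⟨hne, hc⟩ := hab
    have key : ∀ (x : Fin (m + 1)), x.val ≠ 0 →
        G.Adj v (if h0 : x.val = 0 then v else if h1 : x.val = 1 then u
          else if h2 : x.val = 2 then w else e ⟨x.val - 3, by omega⟩) := by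
      intro x hx
      rw [dif_neg hx]
      by_cases h1 : x.val = 1
      · rw [dif_pos h1]; exact hadjvu
      · rw [dif_neg h1]
        by_cases h2 : x.val = 2
        · rw [dif_pos h2]; exact hadjvw
        · rw [dif_neg h2]; exact hadj _ (he _)
    have hone : ((1 : Fin (m + 1))).val = 1 := by
      show 1 % (m + 1) = 1
      exact Nat.mod_eq_of_lt (by omega)
    have htwo : ((2 : Fin (m + 1))).val = 2 := by
      show 2 % (m + 1) = 2
      exact Nat.mod_eq_of_lt (by omega)
    rcases hc with (h0 | ⟨h1, h2⟩) | (h0 | ⟨h1, h2⟩)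
    · have ha : a.val = 0 := by simp [h0]
      have hb : b.val ≠ 0 := fun hb0 => hne (Fin.ext (by omega))
      simp only [dif_pos ha]
      exact key b hb
    · have ha : a.val = 1 := by rw [h1]; exact hone
      have hb : b.val = 2 := by rw [h2]; exact htwo
      simp only [dif_neg (show ¬ a.val = 0 by omega), dif_pos ha,
        dif_neg (show ¬ b.val = 0 by omega), dif_neg (show ¬ b.val = 1 by omega), dif_pos hb]
      exact hadjuw
    · have hb : b.val = 0 := by simp [h0]
      have ha : a.val ≠ 0 := fun ha0 => hne (Fin.ext (by omega))
      simp only [dif_pos hb]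
      exact (key a ha).symm
    · have hb : b.val = 1 := by rw [h1]; exact hone
      have ha : a.val = 2 := by rw [h2]; exact htwo
      simp only [dif_neg (show ¬ a.val = 0 by omega), dif_neg (show ¬ a.val = 1 by omega),
        dif_pos ha, dif_neg (show ¬ b.val = 0 by omega), dif_pos hb]
      exact hadjuw.symm

theorem stmt_8 (n m : ℕ) (hn : 3 ≤ n) (hm : 3 ≤ m) (hmn : m < n + 2)
    (R : SimpleGraph (Fin (2 * n + 1))) :
    Contains R (starG n) ∨ Contains Rᶜ (starPlusE m) := by
  classical
  by_cases h : ∃ v : Fin (2 * n + 1), ∃ s : Finset (Fin (2 * n + 1)),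
      s.card = n ∧ v ∉ s ∧ ∀ x ∈ s, R.Adj v x
  · obtain ⟨v, s, h1, h2, h3⟩ := h
    exact Or.inl (starG_of n R v s h1 h2 h3)
  · have hdeg : ∀ v : Fin (2 * n + 1), (Finset.univ.filter (fun x => R.Adj v x)).card < n := by
      intro v
      by_contra hc
      push_neg at hc
      obtain ⟨t, hts, htc⟩ := Finset.exists_subset_card_eq (n := n) hc
      refine h ⟨v, t, htc, fun hvt => R.irrefl (Finset.mem_filter.mp (hts hvt)).2,
        fun x hx => (Finset.mem_filter.mp (hts hx)).2⟩
    set N : Finset (Fin (2 * n + 1)) := Finset.univ.filter (fun x => Rᶜ.Adj 0 x) with hN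
    have hNmem : ∀ x, x ∈ N ↔ Rᶜ.Adj 0 x := by
      intro x; simp [hN]
    have hNcard : n + 1 ≤ N.card := by
      have hsub : Finset.univ ⊆ N ∪ Finset.univ.filter (fun x => R.Adj 0 x) ∪ {0} := by
        intro x _
        by_cases hx0 : x = (0 : Fin (2 * n + 1))
        · simp [hx0]
        · by_cases hxa : R.Adj 0 x
          · simp [hxa]
          · have : Rᶜ.Adj 0 x := by
              rw [SimpleGraph.compl_adj]
              exact ⟨fun hh => hx0 hh.symm, hxa⟩
            simp only [Finset.mem_union, Finset.mem_singleton]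
            exact Or.inl (Or.inl ((hNmem x).mpr this))
      have h1 := Finset.card_le_card hsub
      have h2 := Finset.card_union_le (N ∪ Finset.univ.filter (fun x => R.Adj 0 x)) {0}
      have h3 := Finset.card_union_le N (Finset.univ.filter (fun x => R.Adj 0 x))
      have h4 : (Finset.univ : Finset (Fin (2 * n + 1))).card = 2 * n + 1 := by
        simp
      have h5 := hdeg 0
      have h6 : ({(0 : Fin (2 * n + 1))} : Finset _).card = 1 := Finset.card_singleton _
      omega
    by_cases hb : ∃ u ∈ N, ∃ w ∈ N, Rᶜ.Adj u w
    · obtain ⟨u, hu, w, hw, huw⟩ := hb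
      have hcard2 : m - 2 ≤ (N \ {u, w}).card := by
        have h1 := Finset.le_card_sdiff ({u, w} : Finset (Fin (2 * n + 1))) N
        have h2 : ({u, w} : Finset (Fin (2 * n + 1))).card ≤ 2 :=
          Finset.card_insert_le u {w} |>.trans (by simp)
        omega
      obtain ⟨s, hsub, hscard⟩ := Finset.exists_subset_card_eq hcard2
      have hsN : ∀ x ∈ s, x ∈ N := fun x hx => (Finset.mem_sdiff.mp (hsub hx)).1
      have h0N : (0 : Fin (2 * n + 1)) ∉ N := by
        rw [hNmem]; exact fun hh => hh.ne rfl
      refine Or.inr (starPlusE_of m hm Rᶜ 0 u w s hscard ?_ ?_ huw.ne ?_ ?_ ?_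
        ((hNmem u).mp hu) ((hNmem w).mp hw) huw (fun x hx => (hNmem x).mp (hsN x hx)))
      · exact ((hNmem u).mp hu).ne
      · exact ((hNmem w).mp hw).ne
      · exact fun hh => h0N (hsN 0 hh)
      · exact fun hh => (Finset.mem_sdiff.mp (hsub hh)).2 (by simp)
      · exact fun hh => (Finset.mem_sdiff.mp (hsub hh)).2 (by simp)
    · push_neg at hb
      obtain ⟨u, hu⟩ := Finset.card_pos.mp (show 0 < N.card by omega)
      have hred : ∀ x ∈ N.erase u, R.Adj u x := by
        intro x hx
        have hne : x ≠ u := Finset.ne_of_mem_erase hx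
        have hnb := hb u hu x (Finset.mem_of_mem_erase hx)
        by_contra hra
        exact hnb ((R.compl_adj u x).mpr ⟨hne.symm, hra⟩)
      obtain ⟨t, hts, htc⟩ := Finset.exists_subset_card_eq (s := N.erase u) (n := n)
        (by rw [Finset.card_erase_of_mem hu]; omega)
      exact absurd ⟨u, t, htc, fun hut => (Finset.mem_erase.mp (hts hut)).1 rfl,
        fun x hx => hred x (hts hx)⟩ h
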